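/- Let γ be a smooth path of duration t and let ξ, ζ be smooth based loops of duration t. Then h_γ(ξ,ζ) = −∫_0^t Σ_i ξ^i(τ) D_γ[ζ]^i(τ) dτ = −∫_0^t Σ_i D_γ[ξ]^i(τ) ζ^i(τ) dτ. In particular, the Jacobi operator D_γ is formally self-adjoint on based loops: ∫_0^t Σ_i ξ^i D_γ[ζ]^i dτ = ∫_0^t Σ_i D_γ[ξ]^i ζ^i dτ. -/

import Mathlib

open MeasureTheory Set
open scoped BigOperators

noncomputable section

/-- Partial derivative of `f : ℝⁿ → ℝ` in the `j`-th coordinate direction. -/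
def pd {n : ℕ} (f : (Fin n → ℝ) → ℝ) (j : Fin n) (q : Fin n → ℝ) : ℝ :=
  fderiv ℝ f q (Pi.single j 1)

/-- The classical equation of motion on the time interval `[0, t]`. -/
def IsClassical {n : ℕ} (B : Fin n → (Fin n → ℝ) → ℝ) (C : (Fin n → ℝ) → ℝ)
    (t : ℝ) (γ : ℝ → Fin n → ℝ) : Prop :=
  ∀ τ ∈ Icc (0:ℝ) t, ∀ i,
    deriv (deriv γ) τ i
      + (∑ j, (pd (B i) j (γ τ) - pd (B j) i (γ τ)) * deriv γ τ j)
      + pd C i (γ τ) = 0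

/-- The Jacobi operator `D_γ` (linearization of the equation of motion along `γ`). -/
def Jacobi {n : ℕ} (B : Fin n → (Fin n → ℝ) → ℝ) (C : (Fin n → ℝ) → ℝ)
    (γ ξ : ℝ → Fin n → ℝ) (τ : ℝ) (i : Fin n) : ℝ :=
  deriv (deriv ξ) τ i
    + (∑ j, (pd (B i) j (γ τ) - pd (B j) i (γ τ)) * deriv ξ τ j)
    + ∑ j, ((∑ k, pd (fun q => pd (B i) k q - pd (B k) i q) j (γ τ) * deriv γ τ k)
        + pd (pd C i) j (γ τ)) * ξ τ j

/-- A classical path of duration `t` is nondegenerate if the only smooth based loop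
annihilated by the Jacobi operator vanishes identically on `[0,t]`. -/
def Nondegenerate {n : ℕ} (B : Fin n → (Fin n → ℝ) → ℝ) (C : (Fin n → ℝ) → ℝ)
    (t : ℝ) (γ : ℝ → Fin n → ℝ) : Prop :=
  ∀ ξ : ℝ → Fin n → ℝ, ContDiff ℝ (⊤ : ℕ∞) ξ → ξ 0 = 0 → ξ t = 0 →
    (∀ τ ∈ Icc (0:ℝ) t, ∀ i, Jacobi B C γ ξ τ i = 0) →
    ∀ τ ∈ Icc (0:ℝ) t, ξ τ = 0

/-- The action of a path of duration `t`. -/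
def action {n : ℕ} (B : Fin n → (Fin n → ℝ) → ℝ) (C : (Fin n → ℝ) → ℝ)
    (t : ℝ) (γ : ℝ → Fin n → ℝ) : ℝ :=
  ∫ τ in (0:ℝ)..t,
    ((1:ℝ)/2 * ∑ i, deriv γ τ i ^ 2 + ∑ i, B i (γ τ) * deriv γ τ i - C (γ τ))

/-- A smooth family of nondegenerate classical paths with boundary values
`(t, q₀, q₁)` ranging over an open set `O ⊆ ℝ_{>0} × ℝⁿ × ℝⁿ`. -/
structure SmoothFamily {n : ℕ} (B : Fin n → (Fin n → ℝ) → ℝ) (C : (Fin n → ℝ) → ℝ)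
    (O : Set (ℝ × (Fin n → ℝ) × (Fin n → ℝ))) where
  f : ℝ → ℝ → (Fin n → ℝ) → (Fin n → ℝ) → Fin n → ℝ
  isOpen : IsOpen O
  pos : ∀ p ∈ O, 0 < p.1
  smooth : ContDiffOn ℝ (⊤ : ℕ∞)
      (fun p : ℝ × ℝ × (Fin n → ℝ) × (Fin n → ℝ) => f p.1 p.2.1 p.2.2.1 p.2.2.2)
      {p : ℝ × ℝ × (Fin n → ℝ) × (Fin n → ℝ) | p.2 ∈ O ∧ p.1 ∈ Icc 0 p.2.1}
  pathSmooth : ∀ p ∈ O, ContDiff ℝ (⊤ : ℕ∞) fun τ => f τ p.1 p.2.1 p.2.2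
  isClassical : ∀ p ∈ O, IsClassical B C p.1 fun τ => f τ p.1 p.2.1 p.2.2
  nondeg : ∀ p ∈ O, Nondegenerate B C p.1 fun τ => f τ p.1 p.2.1 p.2.2
  bdry0 : ∀ p ∈ O, f 0 p.1 p.2.1 p.2.2 = p.2.1
  bdry1 : ∀ p ∈ O, f p.1 p.1 p.2.1 p.2.2 = p.2.2

/-- The Hamilton function of a smooth family of classical paths. -/
def famS {n : ℕ} {B : Fin n → (Fin n → ℝ) → ℝ} {C : (Fin n → ℝ) → ℝ}
    {O : Set (ℝ × (Fin n → ℝ) × (Fin n → ℝ))} (F : SmoothFamily B C O)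
    (t : ℝ) (q0 q1 : Fin n → ℝ) : ℝ :=
  action B C t fun τ => F.f τ t q0 q1

/-- The mixed Hessian `(l, m) ↦ ∂²S/∂q₀^l∂q₁^m`. -/
def Hess01 {n : ℕ} (S : ℝ → (Fin n → ℝ) → (Fin n → ℝ) → ℝ)
    (t : ℝ) (q0 q1 : Fin n → ℝ) : Matrix (Fin n) (Fin n) ℝ :=
  Matrix.of fun l m =>
    fderiv ℝ (fun q0' => fderiv ℝ (fun q1' => S t q0' q1') q1 (Pi.single m 1)) q0
      (Pi.single l 1)

/-- Heaviside's step function, with `Θ 0 = 1/2`. -/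
def Heav (x : ℝ) : ℝ := if x < 0 then 0 else if x = 0 then 1/2 else 1

/-- The Green's kernel `G_γ` of a smooth family of nondegenerate classical paths. -/
def Green {n : ℕ} {B : Fin n → (Fin n → ℝ) → ℝ} {C : (Fin n → ℝ) → ℝ}
    {O : Set (ℝ × (Fin n → ℝ) × (Fin n → ℝ))} (F : SmoothFamily B C O)
    (t : ℝ) (q0 q1 : Fin n → ℝ) (ς τ : ℝ) (i j : Fin n) : ℝ :=
  Heav (ς - τ) * ∑ k, ∑ l,
      fderiv ℝ (fun q => F.f ς t q q1 i) q0 (Pi.single k 1)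
        * ((Hess01 (fun a b c => -(famS F a b c)) t q0 q1).transpose)⁻¹ k l
        * fderiv ℝ (fun q => F.f τ t q0 q j) q1 (Pi.single l 1)
  + Heav (τ - ς) * ∑ k, ∑ l,
      fderiv ℝ (fun q => F.f ς t q0 q i) q1 (Pi.single k 1)
        * (Hess01 (fun a b c => -(famS F a b c)) t q0 q1)⁻¹ k l
        * fderiv ℝ (fun q => F.f τ t q q1 j) q0 (Pi.single l 1)

/-- The Hessian of the action at a path `γ` of duration `t`, as a bilinear form. -/
def hess {n : ℕ} (B : Fin n → (Fin n → ℝ) → ℝ) (C : (Fin n → ℝ) → ℝ)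
    (t : ℝ) (γ ξ ζ : ℝ → Fin n → ℝ) : ℝ :=
  ∫ τ in (0:ℝ)..t,
    ((∑ i, deriv ξ τ i * deriv ζ τ i)
      + (∑ i, ∑ j, pd (B i) j (γ τ) * (deriv ξ τ i * ζ τ j + deriv ζ τ i * ξ τ j))
      + ∑ j, ∑ k,
          ((∑ i, pd (pd (B i) j) k (γ τ) * deriv γ τ i) - pd (pd C j) k (γ τ))
            * (ξ τ j * ζ τ k))

/-- The Jacobi fields `∂γ/∂q_a^j` of a smooth family (`a = 0` or `a = 1`). -/
def jfield {n : ℕ} {B : Fin n → (Fin n → ℝ) → ℝ} {C : (Fin n → ℝ) → ℝ}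
    {O : Set (ℝ × (Fin n → ℝ) × (Fin n → ℝ))} (F : SmoothFamily B C O)
    (t : ℝ) (q0 q1 : Fin n → ℝ) (a : Fin 2) (j : Fin n) : ℝ → Fin n → ℝ :=
  fun τ i =>
    if a = 0 then fderiv ℝ (fun q => F.f τ t q q1 i) q0 (Pi.single j 1)
    else fderiv ℝ (fun q => F.f τ t q0 q i) q1 (Pi.single j 1)

/-- Partial derivative of a function of `(t, q₀, q₁)` in the direction `q_a^j`. -/
def pdS {n : ℕ} (S : ℝ → (Fin n → ℝ) → (Fin n → ℝ) → ℝ) (a : Fin 2) (j : Fin n)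
    (t : ℝ) (q0 q1 : Fin n → ℝ) : ℝ :=
  if a = 0 then fderiv ℝ (fun q => S t q q1) q0 (Pi.single j 1)
  else fderiv ℝ (fun q => S t q0 q) q1 (Pi.single j 1)

namespace St8

variable {n : ℕ}

lemma clm_pi_apply (L : (Fin n → ℝ) →L[ℝ] ℝ) (v : Fin n → ℝ) :
    L v = ∑ k, v k * L (Pi.single k 1) := by
  have hv : v = ∑ k, v k • (Pi.single k 1 : Fin n → ℝ) := by
    ext i; simp [Pi.single_apply, Finset.sum_ite_eq', mul_comm]
  conv_lhs => rw [hv]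
  simp [map_sum, smul_eq_mul]

lemma fderiv_smooth {f : (Fin n → ℝ) → ℝ} (hf : ContDiff ℝ (⊤:ℕ∞) f) :
    ContDiff ℝ (⊤:ℕ∞) (fderiv ℝ f) :=
  (contDiff_infty_iff_fderiv.mp hf).2

lemma pd_contDiff {f : (Fin n → ℝ) → ℝ} (hf : ContDiff ℝ (⊤:ℕ∞) f) (j : Fin n) :
    ContDiff ℝ (⊤:ℕ∞) (pd f j) :=
  (fderiv_smooth hf).clm_apply contDiff_const

lemma pd_comm {f : (Fin n → ℝ) → ℝ} (hf : ContDiff ℝ (⊤:ℕ∞) f) (j k : Fin n) (q : Fin n → ℝ) :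
    pd (pd f j) k q = pd (pd f k) j q := by
  have hsym : IsSymmSndFDerivAt ℝ f q :=
    hf.contDiffAt.isSymmSndFDerivAt (by rw [minSmoothness_of_isRCLikeNormedField]; exact WithTop.coe_le_coe.mpr le_top)
  have hd : DifferentiableAt ℝ (fderiv ℝ f) q :=
    (fderiv_smooth hf).differentiable (by norm_cast) q
  have h1 : ∀ u w : Fin n → ℝ,
      fderiv ℝ (fun y => fderiv ℝ f y u) q w = fderiv ℝ (fderiv ℝ f) q w u := by
    intro u w
    rw [fderiv_clm_apply hd (differentiableAt_const u)]
    simp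
  unfold pd
  rw [h1, h1]
  exact hsym _ _

lemma pd_sub {f g : (Fin n → ℝ) → ℝ} (hf : ContDiff ℝ (⊤:ℕ∞) f) (hg : ContDiff ℝ (⊤:ℕ∞) g)
    (j : Fin n) (q : Fin n → ℝ) :
    pd (fun x => f x - g x) j q = pd f j q - pd g j q := by
  unfold pd
  rw [fderiv_fun_sub ((hf.differentiable (by norm_cast)) q) ((hg.differentiable (by norm_cast)) q)]
  simp

lemma sum2_congr {f g : Fin n → Fin n → ℝ} (h : ∀ i j, f i j = g i j) :
    ∑ i, ∑ j, f i j = ∑ i, ∑ j, g i j :=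
  Finset.sum_congr rfl fun i _ => Finset.sum_congr rfl fun j _ => h i j

lemma sum3_congr {f g : Fin n → Fin n → Fin n → ℝ} (h : ∀ i j k, f i j k = g i j k) :
    ∑ i, ∑ j, ∑ k, f i j k = ∑ i, ∑ j, ∑ k, g i j k :=
  Finset.sum_congr rfl fun i _ => Finset.sum_congr rfl fun j _ =>
    Finset.sum_congr rfl fun k _ => h i j k

lemma alg (P R : Fin n → Fin n → ℝ) (Q : Fin n → Fin n → Fin n → ℝ)
    (hQ : ∀ i j k, Q i j k = Q i k j)
    (x y x' y' y'' g : Fin n → ℝ) :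
    (∑ i, (x' i * y' i + x i * y'' i))
      + ∑ i, ∑ j, ((∑ k, Q i j k * g k) * (x i * y j)
          + P i j * (x' i * y j + x i * y' j))
    = (∑ i, x' i * y' i)
      + (∑ i, ∑ j, P i j * (x' i * y j + y' i * x j))
      + (∑ j, ∑ k, ((∑ i, Q i j k * g i) - R j k) * (x j * y k))
      + ∑ i, x i * (y'' i + (∑ j, (P i j - P j i) * y' j)
          + ∑ j, ((∑ k, (Q i k j - Q k i j) * g k) + R i j) * y j) := by
  have h1 : ∑ i, ∑ j, P i j * (x i * y' j) = ∑ i, ∑ j, x i * (P i j * y' j) :=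
    sum2_congr fun i j => by ring
  have h2 : ∑ i, ∑ j, P i j * (y' i * x j) = ∑ i, ∑ j, x i * (P j i * y' j) := by
    rw [Finset.sum_comm]; exact sum2_congr fun i j => by ring
  have h3 : ∑ i, ∑ j, ∑ k, Q i j k * g k * (x i * y j)
      = ∑ i, ∑ j, ∑ k, x i * (Q i k j * g k * y j) :=
    sum3_congr fun i j k => by rw [hQ]; ring
  have h4 : ∑ i, ∑ j, ∑ k, Q k i j * g k * (x i * y j)
      = ∑ i, ∑ j, ∑ k, x i * (Q k i j * g k * y j) :=
    sum3_congr fun i j k => by ring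
  have h5 : ∑ i, ∑ j, R i j * (x i * y j) = ∑ i, ∑ j, x i * (R i j * y j) :=
    sum2_congr fun i j => by ring
  simp only [mul_add, add_mul, sub_mul, mul_sub, Finset.sum_add_distrib,
    Finset.sum_sub_distrib, Finset.mul_sum, Finset.sum_mul]
  linear_combination h1 - h2 + h3 - h4 + h5

lemma hasDerivAt_apply {f : ℝ → Fin n → ℝ} (hf : Differentiable ℝ f) (τ : ℝ) (i : Fin n) :
    HasDerivAt (fun s => f s i) (deriv f τ i) τ := by
  have h := (hf τ).hasDerivAt
  have := (ContinuousLinearMap.proj (R := ℝ) (φ := fun _ : Fin n => ℝ)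
    i).hasFDerivAt.comp_hasDerivAt τ h
  exact this

lemma hasDerivAt_pd_comp {g : (Fin n → ℝ) → ℝ} {γ : ℝ → Fin n → ℝ}
    (hg : ContDiff ℝ (⊤:ℕ∞) g) (hγ : ContDiff ℝ (⊤:ℕ∞) γ) (τ : ℝ) :
    HasDerivAt (fun s => g (γ s)) (∑ k, pd g k (γ τ) * deriv γ τ k) τ := by
  have h1 : HasDerivAt γ (deriv γ τ) τ := (hγ.differentiable (by norm_cast) τ).hasDerivAt
  have h2 := ((hg.differentiable (by norm_cast)) (γ τ)).hasFDerivAt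
  have h3 := h2.comp_hasDerivAt τ h1
  have h4 : fderiv ℝ g (γ τ) (deriv γ τ) = ∑ k, pd g k (γ τ) * deriv γ τ k := by
    rw [clm_pi_apply]; exact Finset.sum_congr rfl fun k _ => mul_comm _ _
  rw [h4] at h3
  exact h3

lemma deriv_smooth {f : ℝ → Fin n → ℝ} (hf : ContDiff ℝ (⊤:ℕ∞) f) :
    ContDiff ℝ (⊤:ℕ∞) (deriv f) :=
  (contDiff_infty_iff_deriv.mp hf).2


lemma key {B : Fin n → (Fin n → ℝ) → ℝ} {C : (Fin n → ℝ) → ℝ}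
    (hB : ∀ i, ContDiff ℝ (⊤ : ℕ∞) (B i)) (hC : ContDiff ℝ (⊤ : ℕ∞) C)
    (t : ℝ) {γ ξ ζ : ℝ → Fin n → ℝ}
    (hγ : ContDiff ℝ (⊤ : ℕ∞) γ) (hξ : ContDiff ℝ (⊤ : ℕ∞) ξ)
    (hζ : ContDiff ℝ (⊤ : ℕ∞) ζ)
    (hξ0 : ξ 0 = 0) (hξt : ξ t = 0) :
    hess B C t γ ξ ζ = -∫ τ in (0:ℝ)..t, ∑ i, ξ τ i * Jacobi B C γ ζ τ i := by
  -- differentiabilities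
  have hξd : Differentiable ℝ ξ := hξ.differentiable (by norm_cast)
  have hζd : Differentiable ℝ ζ := hζ.differentiable (by norm_cast)
  have hζ' : ContDiff ℝ (⊤:ℕ∞) (deriv ζ) := deriv_smooth hζ
  have hζ'd : Differentiable ℝ (deriv ζ) := hζ'.differentiable (by norm_cast)
  -- component continuities
  have cA : ∀ (f : ℝ → Fin n → ℝ), ContDiff ℝ (⊤:ℕ∞) f → ∀ i, Continuous (fun τ => f τ i) :=
    fun f hf i => (continuous_apply i).comp hf.continuous
  have cx := cA ξ hξ
  have cy := cA ζ hζ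
  have cx' := cA (deriv ξ) (deriv_smooth hξ)
  have cy' := cA (deriv ζ) hζ'
  have cy'' := cA (deriv (deriv ζ)) (deriv_smooth hζ')
  have cg := cA (deriv γ) (deriv_smooth hγ)
  have cP : ∀ i j, Continuous (fun τ => pd (B i) j (γ τ)) :=
    fun i j => ((pd_contDiff (hB i) j).continuous).comp hγ.continuous
  have cQ : ∀ i j k, Continuous (fun τ => pd (pd (B i) j) k (γ τ)) :=
    fun i j k => ((pd_contDiff (pd_contDiff (hB i) j) k).continuous).comp hγ.continuous
  have cR : ∀ i j, Continuous (fun τ => pd (pd C i) j (γ τ)) :=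
    fun i j => ((pd_contDiff (pd_contDiff hC i) j).continuous).comp hγ.continuous
  -- the hessian integrand
  set hI : ℝ → ℝ := fun τ =>
    ((∑ i, deriv ξ τ i * deriv ζ τ i)
      + (∑ i, ∑ j, pd (B i) j (γ τ) * (deriv ξ τ i * ζ τ j + deriv ζ τ i * ξ τ j))
      + ∑ j, ∑ k,
          ((∑ i, pd (pd (B i) j) k (γ τ) * deriv γ τ i) - pd (pd C j) k (γ τ))
            * (ξ τ j * ζ τ k)) with hIdef
  set jI : ℝ → ℝ := fun τ => ∑ i, ξ τ i * Jacobi B C γ ζ τ i with jIdef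
  have chI : Continuous hI := by
    refine ((continuous_finset_sum _ fun i _ => (cx' i).mul (cy' i)).add
      (continuous_finset_sum _ fun i _ => continuous_finset_sum _ fun j _ =>
        (cP i j).mul (((cx' i).mul (cy j)).add ((cy' i).mul (cx j))))).add
      (continuous_finset_sum _ fun j _ => continuous_finset_sum _ fun k _ =>
        ((continuous_finset_sum _ fun i _ => (cQ i j k).mul (cg i)).sub (cR j k)).mul
          ((cx j).mul (cy k)))
  have cJac : ∀ i, Continuous (fun τ => Jacobi B C γ ζ τ i) := by
    intro i
    unfold Jacobi
    refine ((cy'' i).add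
      (continuous_finset_sum _ fun j _ => ((cP i j).sub (cP j i)).mul (cy' j))).add
      (continuous_finset_sum _ fun j _ => ?_)
    refine ((continuous_finset_sum _ fun k _ => Continuous.mul ?_ (cg k)).add (cR i j)).mul (cy j)
    have : (fun τ => pd (fun q => pd (B i) k q - pd (B k) i q) j (γ τ))
        = fun τ => pd (pd (B i) k) j (γ τ) - pd (pd (B k) i) j (γ τ) := by
      funext τ; exact pd_sub (pd_contDiff (hB i) k) (pd_contDiff (hB k) i) j (γ τ)
    rw [this]
    exact (cQ i k j).sub (cQ k i j)
  have cjI : Continuous jI := continuous_finset_sum _ fun i _ => (cx i).mul (cJac i)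
  -- the primitive
  set Φ : ℝ → ℝ := fun τ =>
    (∑ i, ξ τ i * deriv ζ τ i) + ∑ i, ∑ j, pd (B i) j (γ τ) * (ξ τ i * ζ τ j) with hΦdef
  have hΦ : ∀ τ : ℝ, HasDerivAt Φ (hI τ + jI τ) τ := by
    intro τ
    have hxi : ∀ i, HasDerivAt (fun s => ξ s i) (deriv ξ τ i) τ := hasDerivAt_apply hξd τ
    have hyi : ∀ i, HasDerivAt (fun s => ζ s i) (deriv ζ τ i) τ := hasDerivAt_apply hζd τ
    have hy'i : ∀ i, HasDerivAt (fun s => deriv ζ s i) (deriv (deriv ζ) τ i) τ :=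
      hasDerivAt_apply hζ'd τ
    have hPij : ∀ i j, HasDerivAt (fun s => pd (B i) j (γ s))
        (∑ k, pd (pd (B i) j) k (γ τ) * deriv γ τ k) τ :=
      fun i j => hasDerivAt_pd_comp (pd_contDiff (hB i) j) hγ τ
    have hD : HasDerivAt Φ
        ((∑ i, (deriv ξ τ i * deriv ζ τ i + ξ τ i * deriv (deriv ζ) τ i))
          + ∑ i, ∑ j, ((∑ k, pd (pd (B i) j) k (γ τ) * deriv γ τ k) * (ξ τ i * ζ τ j)
              + pd (B i) j (γ τ) * (deriv ξ τ i * ζ τ j + ξ τ i * deriv ζ τ j))) τ := by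
      exact (HasDerivAt.fun_sum fun i _ => (hxi i).mul (hy'i i)).add
        (HasDerivAt.fun_sum fun i _ => HasDerivAt.fun_sum fun j _ =>
          (hPij i j).mul ((hxi i).mul (hyi j)))
    have hval : (∑ i, (deriv ξ τ i * deriv ζ τ i + ξ τ i * deriv (deriv ζ) τ i))
          + ∑ i, ∑ j, ((∑ k, pd (pd (B i) j) k (γ τ) * deriv γ τ k) * (ξ τ i * ζ τ j)
              + pd (B i) j (γ τ) * (deriv ξ τ i * ζ τ j + ξ τ i * deriv ζ τ j))
        = hI τ + jI τ := by
      have halg := alg (fun i j => pd (B i) j (γ τ)) (fun i j => pd (pd C i) j (γ τ))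
        (fun i j k => pd (pd (B i) j) k (γ τ))
        (fun i j k => pd_comm (hB i) j k (γ τ))
        (ξ τ) (ζ τ) (deriv ξ τ) (deriv ζ τ) (deriv (deriv ζ) τ) (deriv γ τ)
      rw [halg]
      have hJac : ∀ i, Jacobi B C γ ζ τ i
          = deriv (deriv ζ) τ i
            + (∑ j, (pd (B i) j (γ τ) - pd (B j) i (γ τ)) * deriv ζ τ j)
            + ∑ j, ((∑ k, (pd (pd (B i) k) j (γ τ) - pd (pd (B k) i) j (γ τ)) * deriv γ τ k)
                + pd (pd C i) j (γ τ)) * ζ τ j := by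
        intro i
        have hps : ∀ i k j, pd (fun q => pd (B i) k q - pd (B k) i q) j (γ τ)
            = pd (pd (B i) k) j (γ τ) - pd (pd (B k) i) j (γ τ) := fun i k j =>
          pd_sub (pd_contDiff (hB i) k) (pd_contDiff (hB k) i) j (γ τ)
        unfold Jacobi
        simp only [hps]
      simp only [hIdef, jIdef, hJac]
    rw [hval] at hD
    exact hD
  -- FTC
  have hint : IntervalIntegrable (fun τ => hI τ + jI τ) volume 0 t :=
    ((chI.add cjI).intervalIntegrable 0 t)
  have hftc : (∫ τ in (0:ℝ)..t, (hI τ + jI τ)) = Φ t - Φ 0 :=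
    intervalIntegral.integral_eq_sub_of_hasDerivAt (fun τ _ => hΦ τ) hint
  have hΦ0 : Φ 0 = 0 := by simp [hΦdef, hξ0]
  have hΦt : Φ t = 0 := by simp [hΦdef, hξt]
  have hsplit : (∫ τ in (0:ℝ)..t, (hI τ + jI τ))
      = (∫ τ in (0:ℝ)..t, hI τ) + ∫ τ in (0:ℝ)..t, jI τ :=
    intervalIntegral.integral_add (chI.intervalIntegrable 0 t) (cjI.intervalIntegrable 0 t)
  have : (∫ τ in (0:ℝ)..t, hI τ) + (∫ τ in (0:ℝ)..t, jI τ) = 0 := by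
    rw [← hsplit, hftc, hΦ0, hΦt]; ring
  have hfin : (∫ τ in (0:ℝ)..t, hI τ) = -∫ τ in (0:ℝ)..t, jI τ := by linarith
  exact hfin


lemma hess_symm {B : Fin n → (Fin n → ℝ) → ℝ} {C : (Fin n → ℝ) → ℝ}
    (hB : ∀ i, ContDiff ℝ (⊤ : ℕ∞) (B i)) (hC : ContDiff ℝ (⊤ : ℕ∞) C)
    (t : ℝ) (γ ξ ζ : ℝ → Fin n → ℝ) :
    hess B C t γ ξ ζ = hess B C t γ ζ ξ := by
  unfold hess
  apply intervalIntegral.integral_congr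
  intro τ _
  have e1 : (∑ i, deriv ξ τ i * deriv ζ τ i) = ∑ i, deriv ζ τ i * deriv ξ τ i :=
    Finset.sum_congr rfl fun i _ => mul_comm _ _
  have e2 : (∑ i, ∑ j, pd (B i) j (γ τ) * (deriv ξ τ i * ζ τ j + deriv ζ τ i * ξ τ j))
      = ∑ i, ∑ j, pd (B i) j (γ τ) * (deriv ζ τ i * ξ τ j + deriv ξ τ i * ζ τ j) :=
    sum2_congr fun i j => by ring
  have e3 : (∑ j, ∑ k, ((∑ i, pd (pd (B i) j) k (γ τ) * deriv γ τ i)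
          - pd (pd C j) k (γ τ)) * (ξ τ j * ζ τ k))
      = ∑ j, ∑ k, ((∑ i, pd (pd (B i) j) k (γ τ) * deriv γ τ i)
          - pd (pd C j) k (γ τ)) * (ζ τ j * ξ τ k) := by
    rw [Finset.sum_comm]
    refine sum2_congr fun j k => ?_
    have h1 : pd (pd C k) j (γ τ) = pd (pd C j) k (γ τ) := pd_comm hC k j (γ τ)
    have h2 : ∀ i, pd (pd (B i) k) j (γ τ) = pd (pd (B i) j) k (γ τ) :=
      fun i => pd_comm (hB i) k j (γ τ)
    simp only [h1, h2]
    ring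
  dsimp only
  rw [e1, e2, e3]

end St8

/-- on based loops the Hessian of the action is given by the Jacobi
operator, which is formally self-adjoint. -/
theorem statement8 {n : ℕ} (hn : 1 ≤ n)
    (B : Fin n → (Fin n → ℝ) → ℝ) (C : (Fin n → ℝ) → ℝ)
    (hB : ∀ i, ContDiff ℝ (⊤ : ℕ∞) (B i)) (hC : ContDiff ℝ (⊤ : ℕ∞) C)
    (t : ℝ) (ht : 0 < t) (γ ξ ζ : ℝ → Fin n → ℝ)
    (hγ : ContDiff ℝ (⊤ : ℕ∞) γ) (hξ : ContDiff ℝ (⊤ : ℕ∞) ξ)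
    (hζ : ContDiff ℝ (⊤ : ℕ∞) ζ)
    (hξ0 : ξ 0 = 0) (hξt : ξ t = 0) (hζ0 : ζ 0 = 0) (hζt : ζ t = 0) :
    hess B C t γ ξ ζ = -∫ τ in (0:ℝ)..t, ∑ i, ξ τ i * Jacobi B C γ ζ τ i ∧
    hess B C t γ ξ ζ = -∫ τ in (0:ℝ)..t, ∑ i, Jacobi B C γ ξ τ i * ζ τ i ∧
    (∫ τ in (0:ℝ)..t, ∑ i, ξ τ i * Jacobi B C γ ζ τ i)
      = ∫ τ in (0:ℝ)..t, ∑ i, Jacobi B C γ ξ τ i * ζ τ i := by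
  constructor
  · exact St8.key hB hC t hγ hξ hζ hξ0 hξt
  constructor
  · have h1 := St8.key hB hC t hγ hζ hξ hζ0 hζt
    have h2 := St8.hess_symm hB hC t γ ξ ζ
    rw [h2, h1]
    congr 1
    apply intervalIntegral.integral_congr
    intro τ _
    exact Finset.sum_congr rfl fun i _ => mul_comm _ _
  · have h1 := St8.key hB hC t hγ hξ hζ hξ0 hξt
    have h2 := St8.key hB hC t hγ hζ hξ hζ0 hζt
    have h3 := St8.hess_symm hB hC t γ ξ ζ
    have h4 : (∫ τ in (0:ℝ)..t, ∑ i, ζ τ i * Jacobi B C γ ξ τ i)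
        = ∫ τ in (0:ℝ)..t, ∑ i, Jacobi B C γ ξ τ i * ζ τ i := by
      apply intervalIntegral.integral_congr
      intro τ _
      exact Finset.sum_congr rfl fun i _ => mul_comm _ _
    rw [← h4]
    linarith
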